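/- In the (non-self-referential) LZ77 parse of a string S, every occurrence of a pattern P in S that does not cross a phrase boundary (a secondary occurrence) is contained in a phrase whose source contains an earlier occurrence of P; consequently, the leftmost occurrence of P in S crosses a phrase boundary (is primary). -/

import Mathlib

/-- `P` occurs in `S` starting at (0-indexed) position `i`. -/
def occursAt {α : Type*} (S P : List α) (i : ℕ) : Prop :=
  i + P.length ≤ S.length ∧ (S.drop i).take P.length = P

/-- Position in `S` where the `t`-th phrase of the parse `bs` begins
(equivalently, where the `(t-1)`-st phrase ends). -/
def phraseEnd {α : Type*} (bs : List (List α)) (t : ℕ) : ℕ :=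
  ((bs.take t).flatten).length

/-- `bs` is the (greedy, non-self-referential) LZ77 parse of `S`:
the phrases concatenate to `S`, each phrase is nonempty, each phrase minus its
last character has an occurrence ending at or before the phrase's start
(or the phrase is a single character), and greediness: unless the phrase reaches
the end of `S`, the whole phrase has no occurrence ending at or before its start. -/
def LZ77Parse {α : Type*} (S : List α) (bs : List (List α)) : Prop :=
  bs.flatten = S ∧ (∀ b ∈ bs, b ≠ []) ∧
  ∀ (t : ℕ) (ht : t < bs.length),
    ((bs.get ⟨t, ht⟩).length = 1 ∨
      ∃ j, occursAt S (bs.get ⟨t, ht⟩).dropLast j ∧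
        j + (bs.get ⟨t, ht⟩).dropLast.length ≤ phraseEnd bs t ∧ j < phraseEnd bs t) ∧
    (phraseEnd bs t + (bs.get ⟨t, ht⟩).length = S.length ∨
      ¬ ∃ j, occursAt S (bs.get ⟨t, ht⟩) j ∧
          j + (bs.get ⟨t, ht⟩).length ≤ phraseEnd bs t)

/-- An occurrence of a length-`m` pattern at position `i` is primary if it contains
the last position of some phrase, i.e. crosses a phrase boundary. -/
def PrimaryOcc {α : Type*} (bs : List (List α)) (i m : ℕ) : Prop :=
  ∃ t < bs.length, i < phraseEnd bs (t + 1) ∧ phraseEnd bs (t + 1) ≤ i + m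


-- extraction lemma
lemma sub_take {α : Type*} {S Q : List α} {j k m : ℕ}
    (hQeq : (S.drop j).take Q.length = Q) (hk : k + m ≤ Q.length) :
    (Q.drop k).take m = (S.drop (j + k)).take m := by
  conv_lhs => rw [← hQeq]
  rw [List.drop_take, List.take_take, List.drop_drop]
  have : m ⊓ (Q.length - k) = m := by omega
  rw [this]

lemma occursAt_trans {α : Type*} {S Q P : List α} {j k : ℕ}
    (h1 : occursAt S Q j) (h2 : occursAt Q P k) : occursAt S P (j + k) := by
  obtain ⟨hl1, he1⟩ := h1
  obtain ⟨hl2, he2⟩ := h2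
  refine ⟨by omega, ?_⟩
  rw [← sub_take he1 hl2, he2]

lemma occursAt_within {α : Type*} {S Q P : List α} {j k : ℕ}
    (h1 : occursAt S Q j) (h2 : occursAt S P (j + k)) (hk : k + P.length ≤ Q.length) :
    occursAt Q P k := by
  obtain ⟨hl1, he1⟩ := h1
  obtain ⟨hl2, he2⟩ := h2
  exact ⟨hk, by rw [sub_take he1 hk, he2]⟩

lemma phraseEnd_drop {α : Type*} (bs : List (List α)) (t : ℕ) :
    bs.flatten.drop (phraseEnd bs t) = (bs.drop t).flatten := by
  conv_lhs => rw [← List.take_append_drop t bs, List.flatten_append]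
  simp [phraseEnd]

lemma occursAt_phrase {α : Type*} (bs : List (List α)) (t : ℕ) (ht : t < bs.length) :
    occursAt bs.flatten bs[t] (phraseEnd bs t) := by
  have hd := phraseEnd_drop bs t
  rw [List.drop_eq_getElem_cons ht] at hd
  have hsplit : bs.flatten.length = phraseEnd bs t + (bs[t] :: List.drop (t + 1) bs).flatten.length := by
    conv_lhs => rw [← List.take_append_drop t bs, List.flatten_append]
    rw [List.drop_eq_getElem_cons ht]
    simp [phraseEnd]
  constructor
  · rw [hsplit]
    simp only [List.flatten_cons, List.length_append]
    omega
  · rw [hd]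
    simp only [List.flatten_cons]
    exact List.take_left

lemma phraseEnd_succ {α : Type*} (bs : List (List α)) (t : ℕ) (ht : t < bs.length) :
    phraseEnd bs (t + 1) = phraseEnd bs t + bs[t].length := by
  unfold phraseEnd
  rw [List.take_succ, List.getElem?_eq_getElem ht]
  rw [List.flatten_append, List.length_append]
  simp

lemma phraseEnd_total {α : Type*} (bs : List (List α)) :
    phraseEnd bs bs.length = bs.flatten.length := by
  simp [phraseEnd]

lemma exists_phrase {α : Type*} (bs : List (List α)) (i : ℕ) (hi : i < bs.flatten.length) :
    ∃ t < bs.length, phraseEnd bs t ≤ i ∧ i < phraseEnd bs (t + 1) := by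
  classical
  set Q : ℕ → Prop := fun t => phraseEnd bs t ≤ i with hQ
  have h0 : Q 0 := by simp [hQ, phraseEnd]
  set t := Nat.findGreatest Q bs.length with hts
  have hspec : Q t := Nat.findGreatest_spec (Nat.zero_le _) h0
  have htlt : t < bs.length := by
    rcases Nat.lt_or_ge t bs.length with h | h
    · exact h
    · exfalso
      have hle : t ≤ bs.length := Nat.findGreatest_le _
      have : t = bs.length := le_antisymm hle h
      have hspec' : phraseEnd bs t ≤ i := hspec
      rw [this, phraseEnd_total] at hspec'
      omega
  refine ⟨t, htlt, hspec, ?_⟩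
  have := Nat.findGreatest_is_greatest (P := Q) (k := t + 1) (n := bs.length)
    (by omega) (by omega)
  simpa [hQ, not_le] using this

lemma occursAt_dropLast {α : Type*} (Q : List α) : occursAt Q Q.dropLast 0 := by
  refine ⟨by simp [List.length_dropLast], ?_⟩
  simp [List.dropLast_eq_take, List.length_dropLast]


/-- In the LZ77 parse, every non-primary (secondary) occurrence of a nonempty
pattern `P` is contained in a phrase and has a strictly earlier occurrence
(copied from the phrase's source); consequently, the leftmost occurrence of `P`
in `S` is primary (crosses a phrase boundary). -/
theorem secondary_has_earlier_and_leftmost_primary {α : Type*} (S : List α)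
    (bs : List (List α)) (h : LZ77Parse S bs) (P : List α) (hP : P ≠ []) :
    (∀ i, occursAt S P i → ¬ PrimaryOcc bs i P.length →
      ∃ t < bs.length, phraseEnd bs t ≤ i ∧ i + P.length ≤ phraseEnd bs (t + 1) ∧
        ∃ j < i, occursAt S P j) ∧
    (∀ i, occursAt S P i → (∀ j, occursAt S P j → i ≤ j) →
      PrimaryOcc bs i P.length) := by
  unfold LZ77Parse at h
  unfold PrimaryOcc
  obtain ⟨hS, hne, hLZ⟩ := h
  have hm : 0 < P.length := List.length_pos_iff.mpr hP
  have key : ∀ i, occursAt S P i → ¬ (∃ t < bs.length, i < phraseEnd bs (t + 1) ∧ phraseEnd bs (t + 1) ≤ i + P.length) →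
      ∃ t < bs.length, phraseEnd bs t ≤ i ∧ i + P.length ≤ phraseEnd bs (t + 1) ∧
        ∃ j < i, occursAt S P j := by
    intro i hi hnp
    have hiS : i < S.length := by have := hi.1; omega
    obtain ⟨t, ht, hle, hlt⟩ := exists_phrase bs i (by rw [hS]; exact hiS)
    push_neg at hnp
    have hmlt : i + P.length < phraseEnd bs (t + 1) := by
      have := hnp t ht hlt
      omega
    refine ⟨t, ht, hle, by omega, ?_⟩
    have hsucc := phraseEnd_succ bs t ht
    obtain ⟨hcase, -⟩ := hLZ t ht
    simp only [List.get_eq_getElem] at hcase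
    rcases hcase with hone | ⟨j, hjocc, hjle, -⟩
    · omega
    · have hbne : bs[t] ≠ [] := hne _ (List.getElem_mem ht)
      have hblen : 0 < bs[t].length := List.length_pos_iff.mpr hbne
      have hdl : bs[t].dropLast.length = bs[t].length - 1 := List.length_dropLast
      set k := i - phraseEnd bs t with hk
      have hQ : occursAt S bs[t] (phraseEnd bs t) := by
        rw [← hS]; exact occursAt_phrase bs t ht
      have hQd : occursAt S bs[t].dropLast (phraseEnd bs t) := by
        have := occursAt_trans hQ (occursAt_dropLast bs[t])
        simpa using this
      have hkm : k + P.length ≤ bs[t].dropLast.length := by omega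
      have hPk : occursAt bs[t].dropLast P k :=
        occursAt_within hQd (by rwa [show phraseEnd bs t + k = i by omega]) hkm
      have hfin := occursAt_trans hjocc hPk
      exact ⟨j + k, by omega, hfin⟩
  refine ⟨key, ?_⟩
  intro i hi hmin
  by_contra hnp
  obtain ⟨t, -, -, -, j, hji, hjocc⟩ := key i hi hnp
  exact absurd (hmin j hjocc) (by omega)
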